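/- The hard lower-bound instance M_{(i*,a*)} admits a rank-d factorization: there exist maps φ : 𝒮×𝒜 → ℝ^d and μ : 𝒮 → ℝ^d such that P(s'|s,a) = ⟨φ(s,a), μ(s')⟩ for all (s,a,s'), ‖φ(s,a)‖₂ ≤ 1 for all (s,a), and for every g : 𝒮 → [0,1], ‖Σ_{s∈𝒮} μ(s)·g(s)‖₂ ≤ √(S−1); in particular, when S = d+1 this bound equals √d, so M_{(i*,a*)} is a low-rank MDP of dimension d (i.e., it satisfies ‖φ(s,a)‖₂ ≤ 1 and ‖Σ_s μ(s)g(s)‖₂ ≤ √d). -/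
import Mathlib


open Finset

noncomputable section

/-- State space of the hard lower-bound instance: the initial state `s_{1,1}`,
the second-level states `s_{2,1},…,s_{2,d−4}`, the good state `s^g`, the bad
state `s^b`, the outlier hub `s^o`, and the outlier states `s^o_1,…,s^o_{S−d}`
(so there are `S` states in total when `S ≥ d`). -/
inductive HState (d S : ℕ) where
  | init : HState d S
  | second : Fin (d - 4) → HState d S
  | good : HState d S
  | bad : HState d S
  | outlierHub : HState d S
  | outlier : Fin (S - d) → HState d S
  deriving DecidableEq, Fintype

/-- Transition kernel of the hard instance `M_{(i*,a*)}`: from `s_{1,1}`, action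
`a_i` with `i ≤ d−4` leads deterministically to `s_{2,i}` and any other action
leads to `s^o`; from `s_{2,i}` with `(i,a) ≠ (i*,a*)` the next state is `s^g`
or `s^b` each with probability `1/2`, while from `s_{2,i*}` under `a*` it is
`s^g` with probability `1/2+ε` and `s^b` with probability `1/2−ε`; from `s^o`
and each `s^o_j` every action leads to a uniformly random outlier state; `s^g`
and `s^b` are absorbing. -/
def hP {d S A : ℕ} (istar : Fin (d - 4)) (astar : Fin A) (ε : ℝ) :
    HState d S → Fin A → HState d S → ℝ
  | .init, a, .second i => if (a : ℕ) = (i : ℕ) then 1 else 0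
  | .init, a, .outlierHub => if d - 4 ≤ (a : ℕ) then 1 else 0
  | .second i, a, .good => if i = istar ∧ a = astar then 1 / 2 + ε else 1 / 2
  | .second i, a, .bad => if i = istar ∧ a = astar then 1 / 2 - ε else 1 / 2
  | .outlierHub, _, .outlier _ => 1 / ((S - d : ℕ) : ℝ)
  | .outlier _, _, .outlier _ => 1 / ((S - d : ℕ) : ℝ)
  | .good, _, .good => 1
  | .bad, _, .bad => 1
  | _, _, _ => 0

/-- Reward of the hard instance: `1` at the good state, `1/2` at the outlier
states, `0` elsewhere. -/
def hR {d S : ℕ} : HState d S → ℝ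
  | .good => 1
  | .outlier _ => 1 / 2
  | _ => 0

open Matrix

noncomputable section

namespace Stmt11Aux

open Matrix Finset

/-- Unit coordinate vector `e_m` in `ℝ^d` (zero if `m ≥ d`). -/
def Ee (d m : ℕ) : Fin d → ℝ := fun k => if (k : ℕ) = m then 1 else 0

lemma Ee_dot (d m n : ℕ) : Ee d m ⬝ᵥ Ee d n = if m = n ∧ m < d then 1 else 0 := by
  classical
  unfold Ee dotProduct
  by_cases hm : m < d
  · rw [Finset.sum_eq_single (⟨m, hm⟩ : Fin d)]
    · simp only [Fin.val_mk, if_pos rfl, one_mul]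
      by_cases h : m = n
      · subst h; simp [hm]
      · simp [h]
    · intro k _ hk
      have : (k:ℕ) ≠ m := fun h => hk (Fin.ext h)
      simp [this]
    · simp
  · rw [if_neg (by tauto)]
    apply Finset.sum_eq_zero
    intro k _
    have : (k:ℕ) ≠ m := by have := k.isLt; omega
    simp [this]

/-- Enumeration of the state space. -/
def hEquiv (d S : ℕ) :
    (Unit ⊕ Fin (d-4) ⊕ Unit ⊕ Unit ⊕ Unit ⊕ Fin (S-d)) ≃ HState d S where
  toFun x := match x with
    | .inl _ => .init
    | .inr (.inl i) => .second i
    | .inr (.inr (.inl _)) => .good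
    | .inr (.inr (.inr (.inl _))) => .bad
    | .inr (.inr (.inr (.inr (.inl _)))) => .outlierHub
    | .inr (.inr (.inr (.inr (.inr j)))) => .outlier j
  invFun s := match s with
    | .init => .inl ()
    | .second i => .inr (.inl i)
    | .good => .inr (.inr (.inl ()))
    | .bad => .inr (.inr (.inr (.inl ())))
    | .outlierHub => .inr (.inr (.inr (.inr (.inl ()))))
    | .outlier j => .inr (.inr (.inr (.inr (.inr j))))
  left_inv x := by rcases x with _ | i | _ | _ | _ | j <;> rfl
  right_inv s := by cases s <;> rfl

lemma hsum_eq {d S : ℕ} {M : Type*} [AddCommMonoid M] (f : HState d S → M) :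
    ∑ s, f s = f .init + (∑ i, f (.second i)) + f .good + f .bad
      + f .outlierHub + ∑ j, f (.outlier j) := by
  rw [← Fintype.sum_equiv (hEquiv d S) (fun x => f (hEquiv d S x)) f (fun _ => rfl)]
  simp [Fintype.sum_sum_type, hEquiv]
  abel

/-- The feature map. -/
def hphi {d S A : ℕ} (istar : Fin (d-4)) (astar : Fin A) (ε c : ℝ) :
    HState d S → Fin A → Fin d → ℝ
  | .init, a => Ee d (if (a:ℕ) < d - 4 then (a:ℕ) else d - 2)
  | .second i, a => (if i = istar ∧ a = astar then 1/2 + ε else 1/2) • Ee d (d-4)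
      + (if i = istar ∧ a = astar then 1/2 - ε else 1/2) • Ee d (d-3)
  | .good, _ => Ee d (d-4)
  | .bad, _ => Ee d (d-3)
  | .outlierHub, _ => c • Ee d (d-1)
  | .outlier _, _ => c • Ee d (d-1)

/-- The measure map. -/
def hmu {d S : ℕ} (c : ℝ) : HState d S → Fin d → ℝ
  | .init => 0
  | .second i => Ee d (i:ℕ)
  | .good => Ee d (d-4)
  | .bad => Ee d (d-3)
  | .outlierHub => Ee d (d-2)
  | .outlier _ => c • Ee d (d-1)

lemma sum_ite_val (d m : ℕ) (hm : m < d) (x : ℝ) :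
    ∑ k : Fin d, (if (k:ℕ) = m then x else 0) = x := by
  rw [Finset.sum_eq_single (⟨m, hm⟩ : Fin d)]
  · simp
  · intro k _ hk; rw [if_neg (fun h => hk (Fin.ext h))]
  · simp

lemma mu_bound (d S : ℕ) (hd : 8 ≤ d) (hS : d + 1 ≤ S) (c : ℝ)
    (hc2 : c * c = (((S - d : ℕ)):ℝ)⁻¹)
    (g : HState d S → ℝ) (hg : ∀ s, g s ∈ Set.Icc (0:ℝ) 1) :
    Real.sqrt ((∑ s, g s • hmu c s) ⬝ᵥ (∑ s, g s • hmu c s)) ≤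
      Real.sqrt ((S : ℝ) - 1) := by
  apply Real.sqrt_le_sqrt
  have hg1 : ∀ s, g s * g s ≤ 1 := fun s => by nlinarith [(hg s).1, (hg s).2]
  have hcast : (((S - d : ℕ)):ℝ) = (S:ℝ) - d := by
    rw [Nat.cast_sub (by omega)]
  have hvk : ∀ k : Fin d, (∑ s, g s • hmu c s) k =
      (if h : (k:ℕ) < d-4 then g (.second ⟨k,h⟩) else 0)
      + ((if (k:ℕ) = d-4 then g .good else 0) + ((if (k:ℕ) = d-3 then g .bad else 0)
      + ((if (k:ℕ) = d-2 then g .outlierHub else 0)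
      + (if (k:ℕ) = d-1 then c * ∑ j, g (.outlier j) else 0)))) := by
    intro k
    rw [Finset.sum_apply, hsum_eq (fun s => (g s • hmu c s) k)]
    simp only [Pi.smul_apply, smul_eq_mul, hmu, Pi.zero_apply, mul_zero, Ee,
      mul_ite, mul_one, zero_add]
    have h1 : ∑ i : Fin (d-4), (if (k:ℕ) = (i:ℕ) then g (HState.second i) else 0)
        = if h : (k:ℕ) < d-4 then g (.second ⟨k,h⟩) else 0 := by
      by_cases h : (k:ℕ) < d - 4
      · rw [dif_pos h, Finset.sum_eq_single (⟨(k:ℕ), h⟩ : Fin (d-4))]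
        · simp
        · intro i _ hi
          rw [if_neg (fun hh => hi (Fin.ext hh.symm))]
        · simp
      · rw [dif_neg h]
        apply Finset.sum_eq_zero
        intro i _
        rw [if_neg (by have := i.isLt; omega)]
    have h2 : ∑ j : Fin (S-d), (if (k:ℕ) = d-1 then g (HState.outlier j) * c else 0)
        = if (k:ℕ) = d-1 then c * ∑ j, g (.outlier j) else 0 := by
      by_cases h : (k:ℕ) = d - 1
      · simp only [if_pos h, Finset.mul_sum]
        exact Finset.sum_congr rfl (fun j _ => mul_comm _ _)
      · simp [h]
    rw [h1, h2]
    ring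
  have hbd : ∀ k : Fin d, ((∑ s, g s • hmu c s) k) * ((∑ s, g s • hmu c s) k) ≤
      1 + (if (k:ℕ) = d-1 then ((S:ℝ) - d) - 1 else 0) := by
    intro k
    rw [hvk k]
    by_cases h1 : (k:ℕ) = d-1
    · rw [if_pos h1, dif_neg (by omega), if_neg (by omega), if_neg (by omega),
        if_neg (by omega), if_pos h1]
      set T := ∑ j, g (HState.outlier (d := d) (S := S) j) with hT
      have hT0 : 0 ≤ T := Finset.sum_nonneg (fun j _ => (hg _).1)
      have hTle : T ≤ (((S - d : ℕ)):ℝ) := by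
        calc T ≤ ∑ _j : Fin (S-d), (1:ℝ) := Finset.sum_le_sum (fun j _ => (hg _).2)
        _ = (((S - d : ℕ)):ℝ) := by simp
      have hnpos : (0:ℝ) < (((S - d : ℕ)):ℝ) := by
        have : 1 ≤ S - d := by omega
        exact_mod_cast Nat.lt_of_lt_of_le Nat.zero_lt_one this
      have hcn : c * c * (((S - d : ℕ)):ℝ) = 1 := by
        rw [hc2]; field_simp
      have hTT : T * T ≤ (((S - d : ℕ)):ℝ) * (((S - d : ℕ)):ℝ) :=
        mul_le_mul hTle hTle hT0 (le_of_lt hnpos)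
      have h2 := mul_le_mul_of_nonneg_left hTT (mul_self_nonneg c)
      rw [hcast] at *
      nlinarith [h2, hcn]
    · rw [if_neg h1, add_zero, if_neg h1, add_zero]
      split_ifs <;>
        first
        | (exfalso; omega)
        | simpa using hg1 _
  calc (∑ s, g s • hmu c s) ⬝ᵥ (∑ s, g s • hmu c s)
      = ∑ k, ((∑ s, g s • hmu c s) k) * ((∑ s, g s • hmu c s) k) := rfl
    _ ≤ ∑ k : Fin d, (1 + (if (k:ℕ) = d-1 then ((S:ℝ) - d) - 1 else 0)) :=
        Finset.sum_le_sum (fun k _ => hbd k)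
    _ = (S:ℝ) - 1 := by
        rw [Finset.sum_add_distrib, sum_ite_val d (d-1) (by omega)]
        simp only [Finset.sum_const, Finset.card_univ, Fintype.card_fin,
          nsmul_eq_mul, mul_one]
        have : ((d:ℝ)) + ((S:ℝ) - d - 1) = (S:ℝ) - 1 := by ring
        exact this

end Stmt11Aux

end

noncomputable section

/-- The hard lower-bound instance `M_{(i*,a*)}` admits a rank-`d` factorization:
there are `φ : 𝒮×𝒜 → ℝ^d` and `μ : 𝒮 → ℝ^d` with
`P(s'|s,a) = ⟨φ(s,a), μ(s')⟩`, `‖φ(s,a)‖₂ ≤ 1`, and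
`‖Σ_s μ(s)g(s)‖₂ ≤ √(S−1)` for every `g : 𝒮 → [0,1]`; in particular, when
`S = d+1` the latter bound equals `√d`, so `M_{(i*,a*)}` is a low-rank MDP of
dimension `d`. -/
theorem stmt_11 (d S A : ℕ) (hd : 8 ≤ d) (hS : d + 1 ≤ S) (hA : d - 3 ≤ A)
    (ε : ℝ) (hε : ε ∈ Set.Icc (0 : ℝ) (1 / 4))
    (istar : Fin (d - 4)) (astar : Fin A) :
    ∃ (φ : HState d S → Fin A → Fin d → ℝ) (μ : HState d S → Fin d → ℝ),
      (∀ s a s', hP istar astar ε s a s' = φ s a ⬝ᵥ μ s') ∧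
      (∀ s a, Real.sqrt (φ s a ⬝ᵥ φ s a) ≤ 1) ∧
      (∀ g : HState d S → ℝ, (∀ s, g s ∈ Set.Icc (0 : ℝ) 1) →
        Real.sqrt ((∑ s, g s • μ s) ⬝ᵥ (∑ s, g s • μ s)) ≤
          Real.sqrt ((S : ℝ) - 1)) ∧
      (S = d + 1 →
        ∀ g : HState d S → ℝ, (∀ s, g s ∈ Set.Icc (0 : ℝ) 1) →
          Real.sqrt ((∑ s, g s • μ s) ⬝ᵥ (∑ s, g s • μ s)) ≤
            Real.sqrt (d : ℝ)) := by

  classical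
  open Stmt11Aux in
  obtain ⟨hε1, hε2⟩ := hε
  set c : ℝ := (Real.sqrt (((S - d : ℕ)):ℝ))⁻¹ with hc
  have hc2 : c * c = (((S - d : ℕ)):ℝ)⁻¹ := by
    rw [hc, ← mul_inv, Real.mul_self_sqrt (Nat.cast_nonneg _)]
  have hcle : c * c ≤ 1 := by
    rw [hc2]
    have h1 : (1:ℝ) ≤ (((S - d : ℕ)):ℝ) := by
      exact_mod_cast (by omega : 1 ≤ S - d)
    exact inv_le_one_of_one_le₀ h1
  refine ⟨hphi istar astar ε c, hmu c, ?_, ?_,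
    fun g hg => mu_bound d S hd hS c hc2 g hg, ?_⟩
  · intro s a s'
    cases s <;> cases s' <;>
      simp only [hP, hphi, hmu, dotProduct_zero, zero_dotProduct, add_dotProduct,
        smul_dotProduct, dotProduct_smul, smul_eq_mul, Ee_dot, mul_ite, ite_mul,
        mul_one, mul_zero, zero_mul, one_mul, zero_add, add_zero, true_and] <;>
      split_ifs <;>
      first
      | rfl
      | omega
      | (exfalso; omega)
      | ring1
      | (linear_combination hc2)
      | (linear_combination -hc2)
  · intro s a
    rw [show (1:ℝ) = Real.sqrt 1 from Real.sqrt_one.symm]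
    apply Real.sqrt_le_sqrt
    cases s <;>
      simp only [hphi, add_dotProduct, dotProduct_add, smul_dotProduct,
        dotProduct_smul, smul_eq_mul, Ee_dot, mul_ite, mul_one, mul_zero, true_and,
        ite_mul, zero_mul, one_mul, add_zero, zero_add] <;>
      split_ifs <;>
      first
      | (exfalso; omega)
      | rfl
      | nlinarith [hε1, hε2, hcle]
  · intro hSd g hg
    have h := mu_bound d S hd hS c hc2 g hg
    rwa [show ((S:ℝ) - 1) = (d:ℝ) by subst hSd; push_cast; ring] at h
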